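/- Let f(x) = f_0 x + f_1 x^q + ... + f_{n-1} x^{q^{n-1}} be a linearized polynomial over F_{q^n} of rank r ≥ 1, and let M be its Dickson matrix with rows M_0, ..., M_{n-1}. Then for every index i, the r cyclically successive rows M_{i mod n}, M_{(i+1) mod n}, ..., M_{(i+r-1) mod n} are linearly independent over F_{q^n}, and every row of M lies in their F_{q^n}-linear span. -/

import Mathlib

set_option linter.unusedSectionVars false
set_option linter.unusedVariables false
set_option linter.unusedTactic false
set_option maxHeartbeats 1000000

open Finset Submodule Polynomial

section DicksonAux


theorem map_span_mem' {K L M N : Type*} [CommRing K] [CommRing L] [AddCommGroup M] [Module K M]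
    [AddCommGroup N] [Module L N] (σ : K →+* L) (T : M → N)
    (h0 : T 0 = 0) (hadd : ∀ a b, T (a + b) = T a + T b)
    (hsmul : ∀ (c : K) (v : M), T (c • v) = σ c • T v)
    {S : Set M} {x : M} (hx : x ∈ Submodule.span K S) :
    T x ∈ Submodule.span L (T '' S) := by
  induction hx using Submodule.span_induction with
  | mem y hy => exact Submodule.subset_span ⟨y, hy, rfl⟩
  | zero => rw [h0]; exact Submodule.zero_mem _
  | add a b _ _ ha hb => rw [hadd]; exact Submodule.add_mem _ ha hb
  | smul c a _ ha => rw [hsmul]; exact Submodule.smul_mem _ _ ha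

variable {Fq Fqn : Type*} [Field Fq] [Fintype Fq] [Field Fqn] [Fintype Fqn] [Algebra Fq Fqn]

theorem exists_pow_hom (m : ℕ) : ∃ σ : Fqn →+* Fqn, ∀ x : Fqn, σ x = x ^ (Fintype.card Fq) ^ m := by
  haveI : CharP Fq (ringChar Fq) := ringChar.charP Fq
  obtain ⟨k, hp, hcard⟩ := FiniteField.card Fq (ringChar Fq)
  haveI : CharP Fqn (ringChar Fq) :=
    charP_of_injective_algebraMap (algebraMap Fq Fqn).injective (ringChar Fq)
  haveI := Fact.mk hp
  refine ⟨iterateFrobenius Fqn (ringChar Fq) (k * m), fun x => ?_⟩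
  rw [iterateFrobenius_def, pow_mul, ← hcard]


variable {Fq Fqn : Type*} [Field Fq] [Fintype Fq] [Field Fqn] [Fintype Fqn] [Algebra Fq Fqn]

theorem pow_q_mod {n : ℕ} (hn : Module.finrank Fq Fqn = n) (x : Fqn) (a : ℕ) :
    x ^ (Fintype.card Fq) ^ a = x ^ (Fintype.card Fq) ^ (a % n) := by
  rcases Nat.eq_zero_or_pos n with rfl | hn0
  · simp [Nat.mod_zero]
  have hcard : Fintype.card Fqn = (Fintype.card Fq) ^ n := by
    rw [Module.card_eq_pow_finrank (K := Fq) (V := Fqn), hn]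
  conv_lhs => rw [← Nat.mod_add_div a n]
  rw [pow_add, mul_comm, pow_mul]
  congr 1
  rw [pow_mul, ← hcard, FiniteField.pow_card_pow]

theorem algmap_fix (c : Fq) (m : ℕ) :
    (algebraMap Fq Fqn c) ^ (Fintype.card Fq) ^ m = algebraMap Fq Fqn c := by
  rw [← map_pow, FiniteField.pow_card_pow]

theorem moore_basis_li {n : ℕ} (hn : Module.finrank Fq Fqn = n) (b : Module.Basis (Fin n) Fq Fqn) :
    LinearIndependent Fqn (fun k : Fin n => fun j : Fin n => b k ^ (Fintype.card Fq) ^ (j : ℕ)) := by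
  classical
  set q := Fintype.card Fq with hq
  have hq1 : 1 < q := Fintype.one_lt_card
  have hn0 : 0 < n := by
    rw [← hn]; exact Module.finrank_pos
  have hcard : Fintype.card Fqn = q ^ n := by
    rw [Module.card_eq_pow_finrank (K := Fq) (V := Fqn), hn]
  choose σ hσ using fun m => exists_pow_hom (Fq := Fq) (Fqn := Fqn) m
  set A : Matrix (Fin n) (Fin n) Fqn := Matrix.of (fun k j : Fin n => b k ^ q ^ (j : ℕ)) with hA
  have : LinearIndependent Fqn (fun k => A k) := by
    rw [show (fun k => A k) = A.row from rfl, Matrix.linearIndependent_rows_iff_isUnit]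
    rw [Matrix.isUnit_iff_isUnit_det, isUnit_iff_ne_zero]
    intro hdet
    obtain ⟨c, hc0, hc⟩ := (Matrix.exists_mulVec_eq_zero_iff).2 hdet
    -- the linearized polynomial map
    have hgadd : ∀ x y : Fqn, (∑ j : Fin n, c j * (x + y) ^ q ^ (j : ℕ)) =
        (∑ j : Fin n, c j * x ^ q ^ (j : ℕ)) + ∑ j : Fin n, c j * y ^ q ^ (j : ℕ) := by
      intro x y
      rw [← Finset.sum_add_distrib]
      refine Finset.sum_congr rfl fun j _ => ?_
      rw [← hσ, ← hσ, ← hσ, map_add, mul_add]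
    have hgsmul : ∀ (lam : Fq) (x : Fqn), (∑ j : Fin n, c j * (lam • x) ^ q ^ (j : ℕ)) =
        lam • ∑ j : Fin n, c j * x ^ q ^ (j : ℕ) := by
      intro lam x
      rw [Finset.smul_sum]
      refine Finset.sum_congr rfl fun j _ => ?_
      rw [Algebra.smul_def, Algebra.smul_def, mul_pow, ← map_pow, FiniteField.pow_card_pow]
      ring
    set g : Fqn →ₗ[Fq] Fqn :=
      { toFun := fun x => ∑ j : Fin n, c j * x ^ q ^ (j : ℕ)
        map_add' := hgadd
        map_smul' := hgsmul } with hg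
    have hgb : ∀ k, g (b k) = 0 := by
      intro k
      have := congrFun hc k
      simpa [Matrix.mulVec, dotProduct, hA, mul_comm, hg] using this
    have hg0 : g = 0 := by
      apply b.ext
      intro k; rw [hgb]; rfl
    have heval : ∀ x : Fqn, (∑ j : Fin n, c j * x ^ q ^ (j : ℕ)) = 0 := by
      intro x
      have := congrArg (fun (h : Fqn →ₗ[Fq] Fqn) => h x) hg0
      simpa [hg] using this
    set P : Fqn[X] := ∑ j : Fin n, Polynomial.C (c j) * Polynomial.X ^ (q ^ (j : ℕ)) with hP
    have hPeval : ∀ x : Fqn, P.eval x = 0 := by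
      intro x
      rw [hP]
      simp only [eval_finset_sum, eval_mul, eval_C, eval_pow, eval_X]
      exact heval x
    have hPdeg : P.natDegree < Fintype.card Fqn := by
      rw [hcard]
      have h1 : P.natDegree ≤ q ^ (n - 1) := by
        refine Polynomial.natDegree_sum_le_of_forall_le _ _ fun j _ => ?_
        refine (Polynomial.natDegree_C_mul_le _ _).trans ?_
        rw [Polynomial.natDegree_X_pow]
        exact Nat.pow_le_pow_right (lt_trans Nat.zero_lt_one hq1)
          (by omega)
      exact lt_of_le_of_lt h1 (Nat.pow_lt_pow_right hq1 (by omega))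
    have hP0 : P = 0 :=
      Polynomial.eq_zero_of_natDegree_lt_card_of_eval_eq_zero P Function.injective_id
        (fun x => hPeval x) hPdeg
    apply hc0
    funext j
    have hcoeff : P.coeff (q ^ (j : ℕ)) = c j := by
      rw [hP, Polynomial.finset_sum_coeff]
      rw [Finset.sum_eq_single j]
      · simp
      · intro j' _ hjj
        simp only [Polynomial.coeff_C_mul, Polynomial.coeff_X_pow]
        rw [if_neg, mul_zero]
        intro h
        exact hjj (Fin.val_injective (Nat.pow_right_injective hq1 h.symm))
      · intro h; exact absurd (Finset.mem_univ j) h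
    rw [← hcoeff, hP0]
    simp
  exact this

theorem moore_li_of_li {n r : ℕ} (hn : Module.finrank Fq Fqn = n) {w : Fin r → Fqn}
    (hw : LinearIndependent Fq w) :
    LinearIndependent Fqn (fun s : Fin r => fun j : Fin n => w s ^ (Fintype.card Fq) ^ (j : ℕ)) := by
  classical
  have hs : LinearIndepOn Fq id (Set.range w) := (linearIndepOn_id_range_iff hw.injective).2 hw
  let t := hs.extend (Set.subset_univ _)
  let B : Module.Basis t Fq Fqn := Module.Basis.extend hs
  haveI : FiniteDimensional Fq Fqn := Module.Finite.of_finite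
  haveI : Fintype t := FiniteDimensional.fintypeBasisIndex B
  have hcardt : Fintype.card t = n := by
    rw [← Module.finrank_eq_card_basis B, hn]
  let e : t ≃ Fin n := Fintype.equivFinOfCardEq hcardt
  let B' : Module.Basis (Fin n) Fq Fqn := B.reindex e
  have hmem : ∀ s : Fin r, w s ∈ t := fun s =>
    hs.subset_extend (Set.subset_univ _) ⟨s, rfl⟩
  let inj : Fin r → Fin n := fun s => e ⟨w s, hmem s⟩
  have hinj : Function.Injective inj := by
    intro s s' h
    have := e.injective h
    exact hw.injective (congrArg Subtype.val this)
  have hB' : ∀ s, B' (inj s) = w s := by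
    intro s
    rw [Module.Basis.reindex_apply]
    show B (e.symm (e ⟨w s, hmem s⟩)) = w s
    rw [e.symm_apply_apply]
    exact Module.Basis.extend_apply_self hs _
  have := (moore_basis_li hn B').comp inj hinj
  convert this using 1
  funext s
  simp only [Function.comp]
  rw [hB']

end DicksonAux


theorem dickson_matrix_successive_rows
    (Fq Fqn : Type*) [Field Fq] [Fintype Fq] [Field Fqn] [Fintype Fqn]
    [Algebra Fq Fqn] (n r : ℕ) (hn : Module.finrank Fq Fqn = n) (hr : 1 ≤ r)
    (f : Fin n → Fqn) (φ : Fqn →ₗ[Fq] Fqn)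
    (hφ : ∀ x : Fqn, φ x = ∑ i : Fin n, f i * x ^ (Fintype.card Fq) ^ (i : ℕ))
    (hrank : Module.finrank Fq (LinearMap.range φ) = r) :
    let M : Matrix (Fin n) (Fin n) Fqn :=
      Matrix.of fun i j : Fin n => f (i - j) ^ (Fintype.card Fq) ^ (j : ℕ)
    ∀ i : Fin n,
      LinearIndependent Fqn
        (fun s : Fin r => M ⟨((i : ℕ) + (s : ℕ)) % n, Nat.mod_lt _ i.pos⟩) ∧
      ∀ m : Fin n, M m ∈ Submodule.span Fqn
        (Set.range fun s : Fin r => M ⟨((i : ℕ) + (s : ℕ)) % n, Nat.mod_lt _ i.pos⟩) := by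
  intro M i
  classical
  haveI : NeZero n := ⟨i.pos.ne'⟩
  letI : CommRing (Fin n) := Fin.instCommRing n
  haveI : FiniteDimensional Fq Fqn := Module.Finite.of_finite
  set q := Fintype.card Fq with hqdef
  have hq1 : 1 < q := Fintype.one_lt_card
  choose σ hσ using fun m => exists_pow_hom (Fq := Fq) (Fqn := Fqn) m
  have hM : ∀ a b : Fin n, M a b = f (a - b) ^ q ^ (b : ℕ) := fun a b => rfl
  have hrn : r ≤ n := by
    have h := Submodule.finrank_le (LinearMap.range φ)
    rwa [hrank, hn] at h
  -- the Moore row map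
  set moore : Fqn → (Fin n → Fqn) := fun x j => x ^ q ^ (j : ℕ) with hmooredef
  have hm0 : moore 0 = 0 := by
    funext j
    show (0:Fqn) ^ q ^ (j:ℕ) = 0
    exact zero_pow (pow_pos (by omega : 0 < q) _).ne'
  have hmadd : ∀ a b : Fqn, moore (a + b) = moore a + moore b := by
    intro a b; funext j
    show (a + b) ^ q ^ (j:ℕ) = a ^ q ^ (j:ℕ) + b ^ q ^ (j:ℕ)
    rw [← hσ, ← hσ, ← hσ, map_add]
  have hmsmul : ∀ (c : Fq) (x : Fqn), moore (c • x) = algebraMap Fq Fqn c • moore x := by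
    intro c x; funext j
    show (c • x) ^ q ^ (j:ℕ) = algebraMap Fq Fqn c • x ^ q ^ (j:ℕ)
    rw [Algebra.smul_def, smul_eq_mul, mul_pow, algmap_fix]
  -- row space
  set R : Submodule Fqn (Fin n → Fqn) := Submodule.span Fqn (Set.range fun m : Fin n => M m)
    with hRdef
  -- a basis
  set b : Module.Basis (Fin n) Fq Fqn := Module.finBasisOfFinrankEq Fq Fqn hn with hbdef
  -- key row computation
  have hAM : ∀ k : Fin n, moore (φ (b k)) = ∑ l : Fin n, (b k ^ q ^ (l : ℕ)) • M l := by
    intro k; funext j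
    have h1 : (∑ l : Fin n, (b k ^ q ^ (l : ℕ)) • M l) j
        = ∑ l : Fin n, b k ^ q ^ (l : ℕ) * M l j := by
      simp [Finset.sum_apply]
    rw [h1]
    have h2 : ∑ l : Fin n, b k ^ q ^ (l : ℕ) * M l j
        = ∑ m : Fin n, b k ^ q ^ (((j + m : Fin n)) : ℕ) * M (j + m) j :=
      (Equiv.sum_comp (Equiv.addLeft j) (fun l => b k ^ q ^ (l : ℕ) * M l j)).symm
    rw [h2]
    have h3 : ∀ m : Fin n, b k ^ q ^ (((j + m : Fin n)) : ℕ) * M (j + m) j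
        = σ (j : ℕ) (f m * b k ^ q ^ (m : ℕ)) := by
      intro m
      have hb : b k ^ q ^ (((j + m : Fin n)) : ℕ) = (b k ^ q ^ (m : ℕ)) ^ q ^ (j : ℕ) := by
        have hv : ((j + m : Fin n) : ℕ) = ((j : ℕ) + (m : ℕ)) % n := by
          rw [Fin.add_def]
        rw [hv, ← pow_q_mod hn, add_comm, pow_add, pow_mul]
      have hMm : M (j + m) j = (f m) ^ q ^ (j : ℕ) := by
        rw [hM]
        congr 2
        ring
      rw [hb, hMm, hσ, mul_pow]
      ring
    rw [Finset.sum_congr rfl (fun m _ => h3 m), ← map_sum]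
    show (φ (b k)) ^ q ^ (j : ℕ) = _
    rw [hσ, hφ]
  -- the Moore matrix of the basis
  set A : Matrix (Fin n) (Fin n) Fqn := Matrix.of (fun k l : Fin n => b k ^ q ^ (l : ℕ)) with hAdef
  have hAunit : IsUnit A := Matrix.linearIndependent_rows_iff_isUnit.1 (moore_basis_li hn b)
  have hAdet : IsUnit A.det := (Matrix.isUnit_iff_isUnit_det _).1 hAunit
  set R' : Submodule Fqn (Fin n → Fqn) :=
    Submodule.span Fqn (Set.range fun k : Fin n => moore (φ (b k))) with hR'def
  have hR'R : R' ≤ R := by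
    rw [hR'def, span_le]
    rintro _ ⟨k, rfl⟩
    show moore (φ (b k)) ∈ R
    rw [hAM k]
    exact Submodule.sum_mem _ fun l _ =>
      Submodule.smul_mem _ _ (Submodule.subset_span ⟨l, rfl⟩)
  have hRR' : R ≤ R' := by
    rw [hRdef, span_le]
    rintro _ ⟨k, rfl⟩
    show M k ∈ R'
    have hMk : M k = ∑ l : Fin n, (A⁻¹ k l) • moore (φ (b l)) := by
      have h0 : A⁻¹ * (A * M) = M := by
        rw [← Matrix.mul_assoc, Matrix.nonsing_inv_mul A hAdet, Matrix.one_mul]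
      have h1 : ∀ l, (A * M) l = moore (φ (b l)) := by
        intro l; funext j
        rw [hAM l]
        simp [Matrix.mul_apply, Finset.sum_apply, hAdef]
      funext j
      conv_lhs => rw [← h0]
      rw [Matrix.mul_apply]
      simp only [Finset.sum_apply, Pi.smul_apply, smul_eq_mul]
      exact Finset.sum_congr rfl fun l _ => by rw [h1 l]
    rw [hMk]
    exact Submodule.sum_mem _ fun l _ =>
      Submodule.smul_mem _ _ (Submodule.subset_span ⟨l, rfl⟩)
  have hRR'eq : R = R' := le_antisymm hRR' hR'R
  -- dimension of the row space
  set W : Submodule Fq Fqn := LinearMap.range φ with hWdef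
  set wB : Module.Basis (Fin r) Fq W := Module.finBasisOfFinrankEq Fq W hrank with hwBdef
  set w : Fin r → Fqn := fun s => ((wB s : W) : Fqn) with hwdef
  have hwli : LinearIndependent Fq w :=
    wB.linearIndependent.map' W.subtype (Submodule.ker_subtype W)
  have hsp1 : Submodule.span Fq (Set.range w) = W := by
    have h : Set.range w = W.subtype '' (Set.range wB) := by
      rw [← Set.range_comp]; rfl
    rw [h, ← Submodule.map_span, wB.span_eq, Submodule.map_subtype_top]
  have hsp2 : Submodule.span Fq (Set.range fun k : Fin n => φ (b k)) = W := by
    have h : Set.range (fun k : Fin n => φ (b k)) = φ '' (Set.range b) :=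
      Set.range_comp φ b
    rw [h, ← Submodule.map_span, b.span_eq, Submodule.map_top]
  have hmw : ∀ k : Fin n, moore (φ (b k)) ∈
      Submodule.span Fqn (Set.range fun s : Fin r => moore (w s)) := by
    intro k
    have h1 : φ (b k) ∈ Submodule.span Fq (Set.range w) := by
      rw [hsp1]; exact LinearMap.mem_range_self φ (b k)
    have h2 := map_span_mem' (algebraMap Fq Fqn) moore hm0 hmadd hmsmul h1
    rwa [← Set.range_comp] at h2
  have hwm : ∀ s : Fin r, moore (w s) ∈ R' := by
    intro s
    have h1 : w s ∈ Submodule.span Fq (Set.range fun k : Fin n => φ (b k)) := by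
      rw [hsp2]
      exact (wB s).2
    have h2 := map_span_mem' (algebraMap Fq Fqn) moore hm0 hmadd hmsmul h1
    rwa [← Set.range_comp] at h2
  have hR'w : R' = Submodule.span Fqn (Set.range fun s : Fin r => moore (w s)) := by
    refine le_antisymm ?_ ?_
    · rw [hR'def, span_le]; rintro _ ⟨k, rfl⟩; exact hmw k
    · rw [span_le]; rintro _ ⟨s, rfl⟩; exact hwm s
  have hRfin : Module.finrank Fqn R = r := by
    rw [hRR'eq, hR'w, finrank_span_eq_card (moore_li_of_li hn hwli), Fintype.card_fin]
  -- Step B: cyclic twist structure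
  set ρ : ℕ → (Fin n → Fqn) := fun t => M (i + (t : Fin n)) with hρdef
  have hvadd1 : ∀ a : Fin n, ((a + 1 : Fin n) : ℕ) = ((a : ℕ) + 1) % n := by
    intro a
    rw [Fin.add_def, Fin.val_one']
    simp only [Fin.val_mk]
    rw [Nat.add_mod (a : ℕ) (1 % n) n, Nat.mod_mod_of_dvd _ dvd_rfl, ← Nat.add_mod]
  have hpw : ∀ (x : Fqn) (a : Fin n),
      x ^ q ^ (((a + 1 : Fin n)) : ℕ) = (x ^ q ^ (a : ℕ)) ^ q := by
    intro x a
    rw [hvadd1, ← pow_q_mod hn, pow_succ, pow_mul]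
  have hTM : ∀ (m j : Fin n), M (m + 1) j = (M m (j - 1)) ^ q := by
    intro m j
    rw [hM, hM]
    have h1 : m - (j - 1) = m + 1 - j := by ring
    rw [h1, ← hpw, sub_add_cancel]
  set T : (Fin n → Fqn) → (Fin n → Fqn) := fun v j => (v (j - 1)) ^ q with hTdef
  have hTrow : ∀ m : Fin n, T (M m) = M (m + 1) := fun m => funext fun j => (hTM m j).symm
  have hT0 : T 0 = 0 := by
    funext j
    show (0 : Fqn) ^ q = 0
    exact zero_pow (by omega)
  have hTadd : ∀ a b : Fin n → Fqn, T (a + b) = T a + T b := by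
    intro a b; funext j
    show (a (j-1) + b (j-1)) ^ q = a (j-1) ^ q + b (j-1) ^ q
    have := hσ 1
    rw [← pow_one q] at *
    rw [← this, ← this, ← this, map_add]
  have hTsmul : ∀ (c : Fqn) (v : Fin n → Fqn), T (c • v) = (σ 1) c • T v := by
    intro c v; funext j
    show (c * v (j-1)) ^ q = (σ 1) c * (v (j-1)) ^ q
    rw [hσ, pow_one, mul_pow]
  have hTρ : ∀ t : ℕ, T (ρ t) = ρ (t + 1) := by
    intro t
    show T (M (i + (t : Fin n))) = M (i + ((t + 1 : ℕ) : Fin n))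
    rw [hTrow]
    congr 1
    push_cast
    ring
  have hstep : ∀ (S : Set ℕ) (t : ℕ), ρ t ∈ Submodule.span Fqn (ρ '' S) →
      ρ (t + 1) ∈ Submodule.span Fqn (ρ '' ((· + 1) '' S)) := by
    intro S t ht
    have h1 := map_span_mem' (σ 1) T hT0 hTadd hTsmul ht
    have himg : T '' (ρ '' S) = ρ '' ((· + 1) '' S) := by
      rw [Set.image_image, Set.image_image]
      exact Set.image_congr fun s _ => hTρ s
    rwa [hTρ, himg] at h1
  have hVk : ∀ k : ℕ, k < r → ρ k ∈ Submodule.span Fqn (ρ '' {t | t < k}) → False := by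
    intro k hk hmem
    have hall : ∀ t : ℕ, ρ (k + t) ∈ Submodule.span Fqn (ρ '' {t | t < k}) := by
      intro t
      induction t with
      | zero => simpa using hmem
      | succ t ih =>
        have h1 := hstep _ _ ih
        have h2 : ((· + 1) '' {t | t < k}) ⊆ insert k {t | t < k} := by
          rintro _ ⟨a, ha, rfl⟩
          rcases Nat.lt_or_ge (a + 1) k with h | h
          · exact Set.mem_insert_iff.2 (Or.inr h)
          · have hak : a + 1 = k := le_antisymm (Nat.succ_le_of_lt ha) h
            exact Set.mem_insert_iff.2 (Or.inl hak)
        have h3 := Submodule.span_mono (Set.image_mono h2) h1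
        rw [Set.image_insert_eq, Submodule.span_insert_eq_span hmem] at h3
        have h4 : k + (t + 1) = k + t + 1 := by omega
        rw [h4]
        exact h3
    have hallrows : ∀ m : Fin n, M m ∈ Submodule.span Fqn (ρ '' {t | t < k}) := by
      intro m
      have hmval : M m = ρ ((m - i : Fin n) : ℕ) := by
        show M m = M (i + (((m - i : Fin n) : ℕ) : Fin n))
        congr 1
        rw [Fin.cast_val_eq_self]
        ring
      rw [hmval]
      rcases Nat.lt_or_ge ((m - i : Fin n) : ℕ) k with h | h
      · exact Submodule.subset_span ⟨_, h, rfl⟩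
      · have heq : ((m - i : Fin n) : ℕ) = k + (((m - i : Fin n) : ℕ) - k) := by omega
        rw [heq]
        exact hall _
    have hRle : R ≤ Submodule.span Fqn (ρ '' {t | t < k}) := by
      rw [hRdef, span_le]
      rintro _ ⟨m, rfl⟩
      exact hallrows m
    have himg : ρ '' {t | t < k} = Set.range (fun s : Fin k => ρ (s : ℕ)) := by
      ext x
      constructor
      · rintro ⟨t, ht, rfl⟩; exact ⟨⟨t, ht⟩, rfl⟩
      · rintro ⟨s, rfl⟩; exact ⟨(s : ℕ), s.2, rfl⟩
    have h5 : Module.finrank Fqn (Submodule.span Fqn (ρ '' {t | t < k})) ≤ k := by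
      rw [himg]
      exact (finrank_range_le_card _).trans (by simp)
    have h6 := Submodule.finrank_mono hRle
    rw [hRfin] at h6
    omega
  -- translate the target family
  have hfam : (fun s : Fin r => M ⟨((i : ℕ) + (s : ℕ)) % n, Nat.mod_lt _ i.pos⟩)
      = fun s : Fin r => ρ (s : ℕ) := by
    funext s
    show _ = M (i + (((s : ℕ)) : Fin n))
    have hidx : (⟨((i : ℕ) + (s : ℕ)) % n, Nat.mod_lt _ i.pos⟩ : Fin n)
        = i + (((s : ℕ)) : Fin n) := by
      apply Fin.ext
      rw [Fin.add_def, Fin.val_natCast]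
      simp only [Fin.val_mk]
      rw [Nat.add_mod (i : ℕ) ((s : ℕ) % n) n, Nat.mod_mod_of_dvd _ dvd_rfl, ← Nat.add_mod]
    rw [hidx]
  have hsetk : ∀ k : ℕ, Set.range (fun s : Fin k => ρ (s : ℕ)) = ρ '' {t | t < k} := by
    intro k
    ext x
    constructor
    · rintro ⟨s, rfl⟩; exact ⟨(s : ℕ), s.2, rfl⟩
    · rintro ⟨t, ht, rfl⟩; exact ⟨⟨t, ht⟩, rfl⟩
  have hli : ∀ k : ℕ, k ≤ r → LinearIndependent Fqn (fun s : Fin k => ρ (s : ℕ)) := by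
    intro k
    induction k with
    | zero => intro _; exact linearIndependent_empty_type
    | succ k ih =>
      intro hk
      have heq : (fun s : Fin (k + 1) => ρ (s : ℕ))
          = Fin.snoc (fun s : Fin k => ρ (s : ℕ)) (ρ k) := by
        funext s
        refine Fin.lastCases ?_ ?_ s
        · rw [Fin.snoc_last, Fin.val_last]
        · intro s'
          rw [Fin.snoc_castSucc, Fin.coe_castSucc]
      rw [heq, linearIndependent_fin_snoc]
      refine ⟨ih (by omega), ?_⟩
      rw [hsetk]
      intro hmem
      exact hVk k (by omega) hmem
  constructor
  · rw [hfam]; exact hli r le_rfl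
  · intro m
    rw [hfam]
    have hWr : Submodule.span Fqn (Set.range fun s : Fin r => ρ (s : ℕ)) = R := by
      apply Submodule.eq_of_le_of_finrank_le
      · rw [span_le]
        rintro _ ⟨s, rfl⟩
        show ρ (s : ℕ) ∈ R
        rw [hρdef, hRdef]
        exact Submodule.subset_span ⟨_, rfl⟩
      · rw [hRfin, finrank_span_eq_card (hli r le_rfl), Fintype.card_fin]
    rw [hWr]
    rw [hRdef]
    exact Submodule.subset_span ⟨m, rfl⟩
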